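/- arXiv:2603.10953 — 5 statements merged into one kernel-verified Lean document; each statement's English description precedes it below -/
import Mathlib

section
/- For any integers n, k ≥ 1 with n = qk + r and 0 ≤ r < k, the maximum number of edges in a K_{k+1}-free simple graph on n vertices equals ((k-1)/(2k))·n² − r(k−r)/(2k). -/
open SimpleGraph Finset

lemma count_residue (n k q r i : ℕ) (hk : 0 < k) (hqr : n = q * k + r) (hrk : r < k)
    (hik : i < k) :
    #((Finset.range n).filter (fun x => x % k = i)) = q + if i < r then 1 else 0 := by
  set m := q + if i < r then 1 else 0 with hm
  have himg : (Finset.range n).filter (fun x => x % k = i)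
      = (Finset.range m).image (fun j => j * k + i) := by
    ext x
    simp only [mem_filter, mem_range, mem_image]
    constructor
    · rintro ⟨hx, hmod⟩
      have hdm := Nat.div_add_mod x k
      have hmul : k * (x / k) = x / k * k := by ring
      refine ⟨x / k, ?_, by omega⟩
      have hq1 : (q + 1) * k = q * k + k := by ring
      by_cases hi : i < r
      · simp only [hm, hi, if_pos]
        rw [Nat.div_lt_iff_lt_mul hk]
        omega
      · have hm' : m = q := by simp [hm, hi]
        rw [hm', Nat.div_lt_iff_lt_mul hk]
        have hri : r ≤ i := Nat.not_lt.mp hi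
        by_contra h
        push_neg at h
        have h2 : q ≤ x / k := (Nat.le_div_iff_mul_le hk).mpr h
        have h3 : q * k ≤ x / k * k := Nat.mul_le_mul_right k h2
        omega
    · rintro ⟨j, hj, rfl⟩
      have hc : k * j = j * k := by ring
      have hmod : (j * k + i) % k = i % k := by rw [← hc]; exact Nat.mul_add_mod k j i
      have hik' : i % k = i := Nat.mod_eq_of_lt hik
      refine ⟨?_, by omega⟩
      by_cases hi : i < r
      · have hm' : m = q + 1 := by simp [hm, hi]
        rw [hm'] at hj
        have : j * k ≤ q * k := Nat.mul_le_mul_right k (by omega)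
        omega
      · have hm' : m = q := by simp [hm, hi]
        rw [hm'] at hj
        have hri : r ≤ i := Nat.not_lt.mp hi
        have h2 : (j + 1) * k ≤ q * k := Nat.mul_le_mul_right k (by omega)
        have h3 : (j + 1) * k = j * k + k := by ring
        omega
  rw [himg, Finset.card_image_of_injective _ (fun a b h => by
    have : a * k = b * k := by omega
    exact Nat.eq_of_mul_eq_mul_right hk this), Finset.card_range]

lemma count_residue_fin (n k q r i : ℕ) (hk : 0 < k) (hqr : n = q * k + r) (hrk : r < k)
    (hik : i < k) :
    #((Finset.univ : Finset (Fin n)).filter (fun v : Fin n => (v : ℕ) % k = i))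
      = q + if i < r then 1 else 0 := by
  rw [← count_residue n k q r i hk hqr hrk hik]
  rw [Finset.card_filter, Finset.card_filter]
  exact Fin.sum_univ_eq_sum_range (fun x => if x % k = i then 1 else 0) n

lemma turan_edge_count (n k q r : ℕ) (hk : 0 < k) (hqr : n = q * k + r) (hrk : r < k) :
    2 * #(turanGraph n k).edgeFinset + (r * (q + 1) ^ 2 + (k - r) * q ^ 2) = n * n := by
  have hdeg : ∀ v : Fin n, (turanGraph n k).degree v
      + #((Finset.univ : Finset (Fin n)).filter (fun w : Fin n => (w : ℕ) % k = (v : ℕ) % k))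
      = n := by
    intro v
    rw [← card_neighborFinset_eq_degree, neighborFinset_eq_filter]
    have : (Finset.univ : Finset (Fin n)).filter ((turanGraph n k).Adj v)
        = (Finset.univ : Finset (Fin n)).filter
            (fun w : Fin n => ¬ ((w : ℕ) % k = (v : ℕ) % k)) := by
      apply Finset.filter_congr
      intro w _
      exact ⟨fun h => fun he => h he.symm, fun h => fun he => h he.symm⟩
    rw [this, add_comm, Finset.card_filter_add_card_filter_not, Finset.card_univ,
      Fintype.card_fin]
  have hsum := (turanGraph n k).sum_degrees_eq_twice_card_edges
  have hsplit : ∑ v : Fin n, ((turanGraph n k).degree v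
      + #((Finset.univ : Finset (Fin n)).filter (fun w : Fin n => (w : ℕ) % k = (v : ℕ) % k)))
      = n * n := by
    rw [Finset.sum_congr rfl (fun v _ => hdeg v), Finset.sum_const, Finset.card_univ,
      Fintype.card_fin, smul_eq_mul]
  rw [Finset.sum_add_distrib, hsum] at hsplit
  have hc : ∀ v : Fin n,
      #((Finset.univ : Finset (Fin n)).filter (fun w : Fin n => (w : ℕ) % k = (v : ℕ) % k))
      = q + if (v : ℕ) % k < r then 1 else 0 := fun v =>
    count_residue_fin n k q r _ hk hqr hrk (Nat.mod_lt _ hk)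
  rw [Finset.sum_congr rfl (fun v _ => hc v)] at hsplit
  have hfib : ∑ v : Fin n, (q + if (v : ℕ) % k < r then 1 else 0)
      = r * (q + 1) ^ 2 + (k - r) * q ^ 2 := by
    rw [Fin.sum_univ_eq_sum_range (fun x => q + if x % k < r then 1 else 0) n]
    rw [← Finset.sum_fiberwise_of_maps_to (g := fun x => x % k) (t := Finset.range k)
      (fun x _ => Finset.mem_range.mpr (Nat.mod_lt _ hk))]
    have hinner : ∀ i ∈ Finset.range k,
        ∑ x ∈ (Finset.range n).filter (fun x => x % k = i),
          (q + if x % k < r then 1 else 0)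
        = (q + if i < r then 1 else 0) * (q + if i < r then 1 else 0) := by
      intro i hi
      rw [Finset.sum_congr rfl (fun x hx => by
        rw [(Finset.mem_filter.mp hx).2]), Finset.sum_const,
        count_residue n k q r i hk hqr hrk (Finset.mem_range.mp hi), smul_eq_mul]
    rw [Finset.sum_congr rfl hinner]
    rw [← Finset.sum_filter_add_sum_filter_not (Finset.range k) (fun i => i < r)]
    have h1 : (Finset.range k).filter (fun i => i < r) = Finset.range r := by
      ext x; simp only [Finset.mem_filter, Finset.mem_range]; omega
    have h2 : (Finset.range k).filter (fun i => ¬ i < r) = Finset.Ico r k := by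
      ext x; simp only [Finset.mem_filter, Finset.mem_range, Finset.mem_Ico]; omega
    rw [h1, h2]
    have hA : ∑ i ∈ Finset.range r, (q + if i < r then 1 else 0) * (q + if i < r then 1 else 0)
        = r * (q + 1) ^ 2 := by
      rw [Finset.sum_congr rfl (fun i hi => by rw [if_pos (Finset.mem_range.mp hi)]),
        Finset.sum_const, Finset.card_range, smul_eq_mul]
      ring
    have hB : ∑ i ∈ Finset.Ico r k, (q + if i < r then 1 else 0) * (q + if i < r then 1 else 0)
        = (k - r) * q ^ 2 := by
      rw [Finset.sum_congr rfl (fun i hi => by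
        rw [if_neg (by have := (Finset.mem_Ico.mp hi).1; omega)]),
        Finset.sum_const, Nat.card_Ico, smul_eq_mul]
      ring
    rw [hA, hB]
  rw [hfib] at hsplit
  omega

theorem turan_max_edges (n k q r : ℕ) (hn : 1 ≤ n) (hk : 1 ≤ k)
    (hqr : n = q * k + r) (hrk : r < k) :
    IsGreatest {m : ℚ | ∃ G : SimpleGraph (Fin n), G.CliqueFree (k + 1) ∧
        m = (G.edgeSet.ncard : ℚ)}
      (((k : ℚ) - 1) / (2 * k) * n ^ 2 - (r * ((k : ℚ) - r)) / (2 * k)) := by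
  have hk0 : 0 < k := hk
  have hkQ : (k : ℚ) ≠ 0 := Nat.cast_ne_zero.mpr hk0.ne'
  set E := #(turanGraph n k).edgeFinset with hE
  have hcount := turan_edge_count n k q r hk0 hqr hrk
  have hnQ : (n : ℚ) = q * k + r := by exact_mod_cast congrArg (Nat.cast (R := ℚ)) hqr
  have hkey : (2 : ℚ) * E + ((r : ℚ) * (q + 1) ^ 2 + ((k : ℚ) - r) * q ^ 2)
      = (n : ℚ) * n := by
    have := congrArg (Nat.cast (R := ℚ)) hcount
    push_cast [Nat.cast_sub hrk.le] at this
    linarith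
  have hval : ((k : ℚ) - 1) / (2 * k) * n ^ 2 - (r * ((k : ℚ) - r)) / (2 * k) = (E : ℚ) := by
    have h2 : (E : ℚ) = ((n : ℚ) * n - ((r : ℚ) * (q + 1) ^ 2 + ((k : ℚ) - r) * q ^ 2)) / 2 := by
      linarith
    rw [h2, hnQ]
    field_simp
    ring
  have hncard : ∀ (H : SimpleGraph (Fin n)) [DecidableRel H.Adj] [Fintype H.edgeSet],
      H.edgeSet.ncard = #H.edgeFinset := by
    intro H _ _
    rw [← SimpleGraph.coe_edgeFinset, Set.ncard_coe_finset]
  constructor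
  · exact ⟨turanGraph n k, turanGraph_cliqueFree hk0, by rw [hval, hncard]⟩
  · rintro m ⟨H, hHcf, rfl⟩
    classical
    have hle := (isTuranMaximal_turanGraph (n := n) hk0).2 (G' := H) hHcf
    rw [hval, hncard H]
    exact_mod_cast hle
end

section
/- Among all tournaments on n vertices, the transitive tournament maximizes the sum of squares of outdegrees, and this maximum equals n(n−1)(2n−1)/6. -/
open Finset


lemma two_choose_two (n : ℕ) : 2 * n.choose 2 = n * (n - 1) := by
  induction n with
  | zero => simp
  | succ m ih =>
    rw [Nat.choose_succ_succ]
    cases m with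
    | zero => simp
    | succ k =>
      simp only [Nat.succ_sub_one] at *
      rw [Nat.choose_one_right]
      nlinarith [ih]

lemma six_choose_three (n : ℕ) : 6 * n.choose 3 = n * (n - 1) * (n - 2) := by
  induction n with
  | zero => simp
  | succ m ih =>
    rw [Nat.choose_succ_succ]
    have h2 := two_choose_two m
    cases m with
    | zero => simp
    | succ k =>
      cases k with
      | zero => decide
      | succ j =>
        simp only [Nat.succ_sub_one] at *
        simp only [show j+1+1-2 = j from by omega, show j+1+1+1-2 = j+1 from by omega] at *
        nlinarith [ih, h2]

lemma six_sum_sq (n : ℕ) : 6 * ∑ k ∈ range n, k^2 = n * (n - 1) * (2 * n - 1) := by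
  induction n with
  | zero => simp
  | succ m ih =>
    rw [Finset.sum_range_succ]
    cases m with
    | zero => simp
    | succ k =>
      simp only [Nat.succ_sub_one] at *
      have : 2 * (k+1) - 1 = 2*k+1 := by omega
      rw [this] at ih
      have : 2 * (k+1+1) - 1 = 2*k+3 := by omega
      rw [this]
      nlinarith [ih]

lemma trans_val (n : ℕ) : ∑ v : Fin n, ((univ.filter fun w : Fin n => v < w).card) ^ 2 = ∑ k ∈ range n, k^2 := by
  have h : ∀ v : Fin n, (univ.filter fun w : Fin n => v < w) = Finset.Ioi v := by
    intro v; ext w; simp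
  simp_rw [h, Fin.card_Ioi]
  rw [Fin.sum_univ_eq_sum_range (fun i => (n - 1 - i)^2) n]
  exact Finset.sum_range_reflect (fun k => k^2) n

lemma tournament_upper (n : ℕ) (T : Fin n → Fin n → Bool)
    (hd : ∀ v, T v v = false) (ha : ∀ u v : Fin n, u ≠ v → T u v = !T v u) :
    ∑ v : Fin n, ((univ.filter fun w : Fin n => T v w = true).card) ^ 2
      ≤ ∑ k ∈ range n, k ^ 2 := by
  classical
  set f : Fin n → Fin n → ℕ := fun v w => if T v w = true then 1 else 0 with hf
  have hcard : ∀ v : Fin n, (univ.filter fun w => T v w = true).card = ∑ w, f v w := by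
    intro v; rw [Finset.card_filter]
  have hff : ∀ v w, f v w * f v w = f v w := by
    intro v w; simp only [hf]; split <;> simp
  have hsplit : ∀ v : Fin n, (∑ w, f v w) ^ 2
      = ∑ w, f v w + ∑ w, ∑ x ∈ univ.erase w, f v w * f v x := by
    intro v
    rw [sq, Finset.sum_mul_sum, ← Finset.sum_add_distrib]
    refine Finset.sum_congr rfl fun w _ => ?_
    rw [← Finset.add_sum_erase _ _ (mem_univ w), hff]
  set Sd : ℕ := ∑ v : Fin n, ∑ w, f v w with hSd
  set N : ℕ := ∑ v : Fin n, ∑ w, ∑ x ∈ univ.erase w, f v w * f v x with hN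
  have hS2 : ∑ v : Fin n, ((univ.filter fun w => T v w = true).card) ^ 2 = Sd + N := by
    simp_rw [hcard, hsplit]
    rw [Finset.sum_add_distrib]
  -- degree sum
  have hpair : ∀ v w : Fin n, f v w + f w v = if v = w then 0 else 1 := by
    intro v w
    by_cases h : v = w
    · simp [hf, h, hd]
    · have h2 := ha v w h
      simp only [hf, h, if_false]
      rw [h2]; cases T w v <;> simp
  have hrow : ∀ v : Fin n, ∑ w : Fin n, (if v = w then 0 else 1) = n - 1 := by
    intro v
    have h1 : ∑ w : Fin n, ((if v = w then 0 else 1) + (if v = w then 1 else 0)) = n := by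
      have : ∀ w : Fin n, ((if v = w then (0:ℕ) else 1) + (if v = w then 1 else 0)) = 1 := by
        intro w; split <;> simp
      simp_rw [this]; simp
    rw [Finset.sum_add_distrib] at h1
    have h2 : ∑ w : Fin n, (if v = w then (1:ℕ) else 0) = 1 := by simp
    omega
  have h2Sd : 2 * Sd = n * (n - 1) := by
    have : 2 * Sd = ∑ v : Fin n, ∑ w, (f v w + f w v) := by
      rw [two_mul]
      simp_rw [Finset.sum_add_distrib]
      congr 1
      rw [Finset.sum_comm]
    rw [this]
    simp_rw [hpair, hrow]
    simp [mul_comm]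
  -- triple count
  set P : Fin n × Fin n × Fin n → Prop :=
    fun t => t.2.2 ≠ t.2.1 ∧ T t.1 t.2.1 = true ∧ T t.1 t.2.2 = true with hP
  set D : Finset (Fin n × Fin n × Fin n) := univ.filter P with hD
  have hND : N = D.card := by
    rw [hD, Finset.card_filter, Fintype.sum_prod_type]
    simp_rw [Fintype.sum_prod_type]
    refine Finset.sum_congr rfl fun v _ => Finset.sum_congr rfl fun w _ => ?_
    rw [← Finset.filter_ne', Finset.sum_filter]
    refine Finset.sum_congr rfl fun x _ => ?_
    simp only [hP, hf]
    split_ifs with h1 h2 <;> simp_all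
  have hDle : D.card ≤ n.choose 3 * 2 := by
    have := Finset.card_le_card_of_injOn
      (f := fun t : Fin n × Fin n × Fin n =>
        (({t.1, t.2.1, t.2.2} : Finset (Fin n)), decide (t.2.1 < t.2.2)))
      (s := D) (t := (univ.powersetCard 3) ×ˢ (univ : Finset Bool)) ?_ ?_
    · calc D.card ≤ ((univ.powersetCard 3) ×ˢ (univ : Finset Bool)).card := this
        _ = n.choose 3 * 2 := by
          rw [Finset.card_product, Finset.card_powersetCard, Finset.card_univ,
            Finset.card_univ]
          simp
    · rintro ⟨v, w, x⟩ ht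
      simp only [hD, hP, Finset.mem_coe, Finset.mem_filter] at ht
      obtain ⟨-, hxw, h1, h2⟩ := ht
      have hvw : v ≠ w := fun h => by rw [h, hd] at h1; exact absurd h1 (by simp)
      have hvx : v ≠ x := fun h => by rw [h, hd] at h2; exact absurd h2 (by simp)
      simp only [Finset.mem_coe, Finset.mem_product, Finset.mem_powersetCard, Finset.mem_univ, and_true]
      refine ⟨Finset.subset_univ _, ?_⟩
      rw [Finset.card_insert_of_notMem (by simp [hvw, hvx]),
        Finset.card_insert_of_notMem (by simpa using hxw.symm),
        Finset.card_singleton]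
    · rintro ⟨v, w, x⟩ ht ⟨v', w', x'⟩ ht' heq
      simp only [hD, hP, Finset.mem_coe, Finset.mem_filter, Finset.mem_univ, true_and] at ht ht'
      obtain ⟨hxw, h1, h2⟩ := ht
      obtain ⟨hxw', h1', h2'⟩ := ht'
      simp only [Prod.mk.injEq] at heq
      obtain ⟨hset, hflag⟩ := heq
      have hv : v = v' := by
        by_contra hne
        have hv'mem : v' ∈ ({v, w, x} : Finset (Fin n)) := by rw [hset]; simp
        have hvmem : v ∈ ({v', w', x'} : Finset (Fin n)) := by rw [← hset]; simp
        simp only [Finset.mem_insert, Finset.mem_singleton] at hv'mem hvmem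
        have hTvv' : T v v' = true := by
          rcases hv'mem with h | h | h
          · exact absurd h.symm hne
          · rw [h]; exact h1
          · rw [h]; exact h2
        have hTv'v : T v' v = true := by
          rcases hvmem with h | h | h
          · exact absurd h (Ne.symm (fun h' => hne h'.symm))
          · rw [h]; exact h1'
          · rw [h]; exact h2'
        have := ha v v' hne
        rw [hTvv', hTv'v] at this
        exact absurd this (by simp)
      subst hv
      have hmemw' : w' ∈ ({v, w, x} : Finset (Fin n)) := by rw [hset]; simp
      have hmemx' : x' ∈ ({v, w, x} : Finset (Fin n)) := by rw [hset]; simp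
      simp only [Finset.mem_insert, Finset.mem_singleton] at hmemw' hmemx'
      have hw'v : w' ≠ v := fun h => by rw [h, hd] at h1'; exact absurd h1' (by simp)
      have hx'v : x' ≠ v := fun h => by rw [h, hd] at h2'; exact absurd h2' (by simp)
      have hw' : w' = w ∨ w' = x := by tauto
      have hx' : x' = w ∨ x' = x := by tauto
      have hww : w = w' ∧ x = x' := by
        rcases hw' with h | h
        · subst h
          rcases hx' with h | h
          · exact absurd h hxw'
          · exact ⟨rfl, h.symm⟩
        · have hx'w : x' = w := by
            rcases hx' with h2 | h2
            · exact h2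
            · rw [h2, ← h] at hxw'; exact absurd rfl hxw'
          exfalso
          rw [decide_eq_decide, ← h, ← hx'w] at hflag
          rcases hxw'.lt_or_gt with hlt | hlt
          · exact absurd (hflag.mp hlt) (lt_asymm hlt)
          · exact absurd (hflag.mpr hlt) (lt_asymm hlt)
      simp [hww.1, hww.2]
  -- assemble
  have hpoly : 3 * (n * (n - 1)) + 2 * (n * (n - 1) * (n - 2)) = n * (n - 1) * (2 * n - 1) := by
    rcases n with _ | _ | m
    · simp
    · simp
    · simp only [show m + 2 - 1 = m + 1 from by omega, show m + 2 - 2 = m from by omega,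
        show 2 * (m + 2) - 1 = 2 * m + 3 from by omega]
      ring
  have h6 : 6 * ∑ k ∈ range n, k ^ 2 = n * (n - 1) * (2 * n - 1) := six_sum_sq n
  have hchoose : 6 * n.choose 3 = n * (n - 1) * (n - 2) := six_choose_three n
  rw [hS2]
  have : 6 * (Sd + N) ≤ 6 * ∑ k ∈ range n, k ^ 2 := by
    have hN6 : 6 * N ≤ 2 * (n * (n - 1) * (n - 2)) := by
      calc 6 * N = 6 * D.card := by rw [hND]
        _ ≤ 6 * (n.choose 3 * 2) := by omega
        _ = 2 * (6 * n.choose 3) := by ring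
        _ = 2 * (n * (n - 1) * (n - 2)) := by rw [hchoose]
    have hSd6 : 6 * Sd = 3 * (n * (n - 1)) := by omega
    omega
  omega


theorem transitive_tournament_max_zagreb (n : ℕ) :
    IsGreatest {m : ℕ | ∃ T : Fin n → Fin n → Bool,
        (∀ v, T v v = false) ∧ (∀ u v : Fin n, u ≠ v → T u v = !T v u) ∧
        m = ∑ v : Fin n, ((univ.filter fun w : Fin n => T v w = true).card) ^ 2}
      (∑ v : Fin n, ((univ.filter fun w : Fin n => v < w).card) ^ 2) ∧
    6 * ∑ v : Fin n, ((univ.filter fun w : Fin n => v < w).card) ^ 2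
      = n * (n - 1) * (2 * n - 1) := by
  refine ⟨⟨⟨fun v w => decide (v < w), ?_, ?_, ?_⟩, ?_⟩, ?_⟩
  · intro v; simp
  · intro u v h
    rw [← decide_not, decide_eq_decide]
    exact ⟨fun h' => asymm h', fun h' => (not_lt.mp h').lt_of_ne h⟩
  · simp
  · rintro m ⟨T, hd, ha, rfl⟩
    rw [trans_val]
    exact tournament_upper n T hd ha
  · rw [trans_val]
    exact six_sum_sq n
end

section
/- Let k,n ∈ ℕ⁺ with n = qk + r, 0 < r < k. For s = 0,…,q, the digraph F^{s+1}_{n,k} has outdegree sequence consisting of the values n−1−(i−1)k each with multiplicity k for i = 1,…,s, the value n−1−sk with multiplicity r, and the values n−1−(i−2)k−r each with multiplicity k for i = s+2,…,q+1; and the sum of this sequence is independent of s, equal to (n² + (k−2)n − r(k−r))/2. -/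
open Finset

/-- Index of the part containing vertex `v` in the digraph `F^{s+1}_{n,k}`
(`s` parts of size `k`, then one part of size `r`, then parts of size `k`). -/
def partIdx (k r s v : ℕ) : ℕ :=
  if v < s * k then v / k
  else if v < s * k + r then s
  else s + 1 + (v - s * k - r) / k

/-- The prescribed outdegree multiset of `F^{s+1}_{n,k}`. -/
def outMultiset (n k q r s : ℕ) : Multiset ℕ :=
  (Finset.range s).val.bind (fun i => Multiset.replicate k (n - 1 - i * k))
    + Multiset.replicate r (n - 1 - s * k)
    + (Finset.range (q - s)).val.bind (fun i => Multiset.replicate k (n - 1 - (s + i) * k - r))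

def pStart (k r s v : ℕ) : ℕ :=
  if v < s * k then v / k * k
  else if v < s * k + r then s * k
  else s * k + r + (v - s * k - r) / k * k

lemma pStart_le (k r s v : ℕ) : pStart k r s v ≤ v := by
  unfold pStart
  split_ifs with h1 h2
  · exact Nat.div_mul_le_self v k
  · omega
  · have := Nat.div_mul_le_self (v - s * k - r) k; omega

lemma partIdx_mono (k r s : ℕ) (hk : 0 < k) {a b : ℕ} (hab : a ≤ b) :
    partIdx k r s a ≤ partIdx k r s b := by
  unfold partIdx
  split_ifs with h1 h2 h3 h4 h5 h6
  · exact Nat.div_le_div_right hab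
  · exact le_of_lt ((Nat.div_lt_iff_lt_mul hk).2 h1)
  · exact le_trans (le_of_lt ((Nat.div_lt_iff_lt_mul hk).2 h1))
      ((Nat.le_succ s).trans (Nat.le_add_right _ _))
  · exfalso; omega
  · exact le_refl _
  · exact (Nat.le_succ s).trans (Nat.le_add_right _ _)
  · exfalso; omega
  · exfalso; omega
  · exact Nat.add_le_add_left (Nat.div_le_div_right (by omega)) _

lemma partIdx_pStart (k r s : ℕ) (hk : 0 < k) (hr : 0 < r) (v : ℕ) :
    partIdx k r s (pStart k r s v) = partIdx k r s v := by
  by_cases h1 : v < s * k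
  · have hlt : v / k * k < s * k := lt_of_le_of_lt (Nat.div_mul_le_self v k) h1
    simp only [pStart, partIdx, if_pos h1, if_pos hlt]
    exact Nat.mul_div_cancel _ hk
  · by_cases h2 : v < s * k + r
    · simp only [pStart, partIdx, if_neg h1, if_pos h2]
      rw [if_neg (lt_irrefl (s * k)), if_pos (by omega)]
    · simp only [pStart, partIdx, if_neg h1, if_neg h2]
      rw [if_neg (by omega), if_neg (by omega)]
      congr 1
      have h13 : s * k + r + (v - s * k - r) / k * k - s * k - r = (v - s * k - r) / k * k := by
        omega
      rw [h13, Nat.mul_div_cancel _ hk]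

lemma partIdx_lt_of_lt_pStart (k r s : ℕ) (hk : 0 < k) {v w : ℕ}
    (hw : w < pStart k r s v) : partIdx k r s w < partIdx k r s v := by
  unfold pStart at hw
  unfold partIdx
  split_ifs at hw with h1 h2
  · have hwsk : w < s * k := lt_of_lt_of_le hw (le_trans (Nat.div_mul_le_self v k) (le_of_lt h1))
    rw [if_pos hwsk, if_pos h1]
    exact (Nat.div_lt_iff_lt_mul hk).2 hw
  · rw [if_pos hw, if_neg h1, if_pos h2]
    exact (Nat.div_lt_iff_lt_mul hk).2 hw
  · rw [if_neg h1, if_neg h2]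
    split_ifs with hw1 hw2
    · exact lt_of_lt_of_le ((Nat.div_lt_iff_lt_mul hk).2 hw1)
        (le_trans (Nat.le_succ s) (Nat.le_add_right _ _))
    · exact lt_of_lt_of_le (Nat.lt_succ_self s) (Nat.le_add_right _ _)
    · exact Nat.add_lt_add_left ((Nat.div_lt_iff_lt_mul hk).2 (by omega)) _

lemma partIdx_le_iff (k r s : ℕ) (hk : 0 < k) (hr : 0 < r) (v w : ℕ) :
    partIdx k r s v ≤ partIdx k r s w ↔ pStart k r s v ≤ w := by
  constructor
  · intro h
    by_contra hc
    exact absurd h (not_le.2 (partIdx_lt_of_lt_pStart k r s hk (by omega)))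
  · intro h
    calc partIdx k r s v = partIdx k r s (pStart k r s v) :=
          (partIdx_pStart k r s hk hr v).symm
      _ ≤ partIdx k r s w := partIdx_mono k r s hk h

lemma card_filter_le_fin (n b : ℕ) :
    ((Finset.univ : Finset (Fin n)).filter fun w : Fin n => b ≤ (w : ℕ)).card = n - b := by
  rw [Finset.card_filter]
  rw [Fin.sum_univ_eq_sum_range (fun i => if b ≤ i then 1 else 0)]
  rw [← Finset.card_filter]
  rw [show (Finset.range n).filter (fun i => b ≤ i) = Finset.Ico b n by
    ext x; simp [Finset.mem_Ico]; omega]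
  exact Nat.card_Ico b n

lemma deg_card (n k r s : ℕ) (hk : 0 < k) (hr : 0 < r) (v : Fin n) :
    ((Finset.univ.filter fun w : Fin n =>
        v ≠ w ∧ partIdx k r s ↑v ≤ partIdx k r s ↑w).card) = n - 1 - pStart k r s ↑v := by
  have hfe : (Finset.univ.filter fun w : Fin n =>
        v ≠ w ∧ partIdx k r s ↑v ≤ partIdx k r s ↑w)
      = (Finset.univ.filter fun w : Fin n => pStart k r s ↑v ≤ (w : ℕ)).erase v := by
    ext w
    simp only [Finset.mem_filter, Finset.mem_erase, Finset.mem_univ, true_and,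
      partIdx_le_iff k r s hk hr]
    tauto
  rw [hfe, Finset.card_erase_of_mem, card_filter_le_fin]
  · have h1 : pStart k r s ↑v ≤ ↑v := pStart_le k r s ↑v
    have h2 : (v : ℕ) < n := v.isLt
    omega
  · simp only [Finset.mem_filter, Finset.mem_univ, true_and]
    exact pStart_le k r s ↑v

lemma univ_val_map_range (n : ℕ) (f : Fin n → ℕ) (h : ℕ → ℕ) (hf : ∀ v : Fin n, f v = h ↑v) :
    (Finset.univ.val.map f) = (Multiset.range n).map h := by
  have h0 : f = fun v : Fin n => h ↑v := funext hf
  subst h0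
  simp only [Fin.univ_val_map, List.ofFn_eq_map, Multiset.range, ← Multiset.map_coe,
    ← (show (List.finRange n).map Fin.val = List.range n from
      List.ext_getElem (by simp) (by simp)), List.map_map, Multiset.map_map]
  rfl

lemma range_mul_map (k : ℕ) (hk : 0 < k) (g : ℕ → ℕ) :
    ∀ m : ℕ, (Multiset.range (m * k)).map (fun v => g (v / k))
      = (Multiset.range m).bind (fun i => Multiset.replicate k (g i)) := by
  intro m
  induction m with
  | zero => simp
  | succ m ih =>
    rw [Nat.succ_mul, Multiset.range_add, Multiset.map_add, ih, Multiset.range_succ,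
      Multiset.cons_bind, Multiset.map_map]
    have h2 : (Multiset.range k).map ((fun v => g (v / k)) ∘ (m * k + ·))
        = Multiset.replicate k (g m) := by
      have hr2 : (Multiset.range k).map ((fun v => g (v / k)) ∘ (m * k + ·))
          = (Multiset.range k).map (fun _ => g m) :=
        Multiset.map_congr rfl (fun j hj => by
          rw [Multiset.mem_range] at hj
          simp only [Function.comp]
          rw [Nat.add_comm, Nat.add_mul_div_right _ _ hk, Nat.div_eq_of_lt hj, Nat.zero_add])
      rw [hr2, Multiset.map_const', Multiset.card_range]
    rw [h2]
    exact add_comm _ _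

lemma sumAP (a K : ℤ) : ∀ t : ℕ,
    2 * ∑ i ∈ Finset.range t, (a - (i : ℤ) * K) = 2 * t * a - K * (t * (t - 1)) := by
  intro t
  induction t with
  | zero => simp
  | succ t ih =>
    rw [Finset.sum_range_succ]
    push_cast
    linear_combination ih

theorem F_outdegree_sequence (n k q r : ℕ) (hn : 1 ≤ n) (hk : 1 ≤ k)
    (hqr : n = q * k + r) (hr0 : 0 < r) (hrk : r < k) (s : ℕ) (hs : s ≤ q) :
    (Finset.univ.val.map (fun v : Fin n =>
        (univ.filter fun w : Fin n => v ≠ w ∧ partIdx k r s ↑v ≤ partIdx k r s ↑w).card)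
      = outMultiset n k q r s) ∧
    2 * (outMultiset n k q r s).sum + r * (k - r) = n ^ 2 + (k - 2) * n := by
  have hk2 : 2 ≤ k := by omega
  obtain ⟨m, rfl⟩ : ∃ m, q = s + m := ⟨q - s, by omega⟩
  subst hqr
  set N := (s + m) * k + r with hN
  have hsk : s * k + r + m * k = N := by rw [hN]; ring
  constructor
  · -- multiset part
    have hmap : Finset.univ.val.map (fun v : Fin N =>
          (Finset.univ.filter fun w : Fin N =>
            v ≠ w ∧ partIdx k r s ↑v ≤ partIdx k r s ↑w).card)
        = Finset.univ.val.map (fun v : Fin N => N - 1 - pStart k r s ↑v) :=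
      Multiset.map_congr rfl (fun v _ => deg_card N k r s hk hr0 v)
    rw [hmap, univ_val_map_range N _ (fun x => N - 1 - pStart k r s x) (fun v => rfl)]
    unfold outMultiset
    rw [Finset.range_val, Finset.range_val, Nat.add_sub_cancel_left]
    have hsplit : Multiset.range N = (Multiset.range (s * k)
          + (Multiset.range r).map (s * k + ·))
          + (Multiset.range (m * k)).map (s * k + r + ·) := by
      rw [← hsk, Multiset.range_add, Multiset.range_add]
    rw [hsplit, Multiset.map_add, Multiset.map_add, Multiset.map_map, Multiset.map_map]
    congr 1
    congr 1
    · -- piece 1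
      have e : (Multiset.range (s * k)).map (fun v => N - 1 - pStart k r s v)
          = (Multiset.range (s * k)).map (fun v => (fun i => N - 1 - i * k) (v / k)) :=
        Multiset.map_congr rfl (fun v hv => by
          rw [Multiset.mem_range] at hv
          simp only [pStart, if_pos hv])
      rw [e]
      exact range_mul_map k hk (fun i => N - 1 - i * k) s
    · -- piece 2
      have e : (Multiset.range r).map ((fun v => N - 1 - pStart k r s v) ∘ (s * k + ·))
          = (Multiset.range r).map (fun _ => N - 1 - s * k) :=
        Multiset.map_congr rfl (fun j hj => by
          rw [Multiset.mem_range] at hj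
          simp only [Function.comp]
          have h1 : pStart k r s (s * k + j) = s * k := by
            simp only [pStart]
            rw [if_neg (by omega), if_pos (by omega)]
          rw [h1])
      rw [e, Multiset.map_const', Multiset.card_range]
    · -- piece 3
      have e : (Multiset.range (m * k)).map
            ((fun v => N - 1 - pStart k r s v) ∘ (s * k + r + ·))
          = (Multiset.range (m * k)).map
            (fun u => (fun i => N - 1 - (s + i) * k - r) (u / k)) :=
        Multiset.map_congr rfl (fun u hu => by
          rw [Multiset.mem_range] at hu
          simp only [Function.comp]
          have h1 : pStart k r s (s * k + r + u) = s * k + r + u / k * k := by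
            simp only [pStart]
            rw [if_neg (by omega), if_neg (by omega)]
            have h2 : s * k + r + u - s * k - r = u := by omega
            rw [h2]
          rw [h1, add_mul]
          omega)
      rw [e]
      exact range_mul_map k hk (fun i => N - 1 - (s + i) * k - r) m
  · -- sum part
    have hbsum : ∀ (t : ℕ) (f : ℕ → ℕ),
        ((Multiset.range t).bind fun i => Multiset.replicate k (f i)).sum
          = ∑ i ∈ Finset.range t, k * f i := by
      intro t f
      induction t with
      | zero => simp
      | succ t ih =>
        rw [Multiset.range_succ, Multiset.cons_bind, Multiset.sum_add, ih,
          Finset.sum_range_succ, Multiset.sum_replicate, smul_eq_mul]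
        omega
    unfold outMultiset
    rw [Finset.range_val, Finset.range_val, Nat.add_sub_cancel_left,
      Multiset.sum_add, Multiset.sum_add, hbsum s _, hbsum m _,
      Multiset.sum_replicate, smul_eq_mul]
    -- move to ℤ
    have cast_goal : ∀ a b : ℕ, (a : ℤ) = b → a = b := fun a b h => by exact_mod_cast h
    apply cast_goal
    push_cast [Nat.cast_sub hrk.le, Nat.cast_sub hk2]
    have E1 : ∑ x ∈ Finset.range s, (k:ℤ) * ((N - 1 - x * k : ℕ) : ℤ)
        = ∑ x ∈ Finset.range s, ((k:ℤ) * ((N:ℤ) - 1) - (x:ℤ) * ((k:ℤ)*(k:ℤ))) := by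
      refine Finset.sum_congr rfl fun i hi => ?_
      rw [Finset.mem_range] at hi
      have h1 : (i+1) * k ≤ (s+m) * k := Nat.mul_le_mul_right _ (by omega)
      rw [add_mul, one_mul] at h1
      rw [Nat.cast_sub (by omega), Nat.cast_sub (by omega)]
      push_cast
      ring
    have E2 : ((N - 1 - s * k : ℕ) : ℤ) = (N:ℤ) - 1 - (s:ℤ)*(k:ℤ) := by
      have h1 : s * k ≤ (s+m) * k := Nat.mul_le_mul_right _ (by omega)
      rw [Nat.cast_sub (by omega), Nat.cast_sub (by omega)]
      push_cast; ring
    have E3 : ∑ x ∈ Finset.range m, (k:ℤ) * ((N - 1 - (s + x) * k - r : ℕ) : ℤ)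
        = ∑ x ∈ Finset.range m,
            (((k:ℤ) * ((N:ℤ) - 1) - (s:ℤ)*((k:ℤ)*(k:ℤ)) - (k:ℤ)*(r:ℤ)) - (x:ℤ) * ((k:ℤ)*(k:ℤ))) := by
      refine Finset.sum_congr rfl fun i hi => ?_
      rw [Finset.mem_range] at hi
      have h1 : (s + i + 1) * k ≤ (s + m) * k := Nat.mul_le_mul_right _ (by omega)
      rw [add_mul, one_mul] at h1
      have h2 : (s + i) * k = s * k + i * k := add_mul s i k
      rw [Nat.cast_sub (by omega), Nat.cast_sub (by omega), Nat.cast_sub (by omega)]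
      push_cast
      ring
    rw [E1, E2, E3]
    have G1 := sumAP ((k:ℤ) * ((N:ℤ) - 1)) ((k:ℤ)*(k:ℤ)) s
    have G3 := sumAP ((k:ℤ) * ((N:ℤ) - 1) - (s:ℤ)*((k:ℤ)*(k:ℤ)) - (k:ℤ)*(r:ℤ)) ((k:ℤ)*(k:ℤ)) m
    have hNZ : (N:ℤ) = ((s:ℤ) + (m:ℤ)) * (k:ℤ) + (r:ℤ) := by rw [hN]; push_cast; ring
    rw [hNZ] at G1 G3 ⊢
    linear_combination G1 + G3
end

section
/- Let k,n ∈ ℕ⁺ with n = qk + r, 0 < r < k, and let 0 ≤ s₂ < s₁ ≤ q. Then the nonincreasing outdegree sequence of F^{s₁+1}_{n,k} majorizes that of F^{s₂+1}_{n,k}: for every t with 1 ≤ t ≤ n, the sum of the t largest outdegrees of F^{s₂+1}_{n,k} is at most that of F^{s₁+1}_{n,k}, with equality of total sums when t = n. -/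
open Finset

/-- The nonincreasing outdegree sequence of `F^{s+1}_{n,k}`:
position `i` (0-based) carries the `(i+1)`-st largest outdegree. -/
def dseq (n k r s i : ℕ) : ℕ :=
  if i < s * k then n - 1 - (i / k) * k
  else if i < s * k + r then n - 1 - s * k
  else n - 1 - ((s + (i - s * k - r) / k) * k + r)

def gfun (k r s i : ℕ) : ℤ :=
  if i < s * k + r then 0
  else if i < s * k + k then (r : ℤ)
  else if i < s * k + k + r then (r : ℤ) - k
  else 0

lemma dseq_succ (n k q r s : ℕ) (hk : 1 ≤ k)
    (hqr : n = q * k + r) (hr0 : 0 < r) (hrk : r < k) (hs : s + 1 ≤ q) (i : ℕ) :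
    (dseq n k r (s+1) i : ℤ) = dseq n k r s i + gfun k r s i := by
  have hsk1 : (s+1) * k = s * k + k := by ring
  have hqk : s * k + k + r ≤ n := by
    have h1 : (s+1) * k ≤ q * k := Nat.mul_le_mul_right k hs
    rw [hsk1] at h1; omega
  unfold dseq gfun
  rw [hsk1]
  by_cases hA : i < s * k
  · rw [if_pos hA, if_pos (show i < s*k + k by omega), if_pos (show i < s*k + r by omega)]
    simp
  · by_cases hB : i < s * k + r
    · have hdiv : i / k = s := Nat.div_eq_of_lt_le (by omega) (by rw [add_mul, one_mul]; omega)
      rw [if_neg hA, if_pos hB, if_pos (show i < s*k + k by omega), if_pos hB, hdiv]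
      simp
    · by_cases hC : i < s * k + k
      · have hdiv : i / k = s := Nat.div_eq_of_lt_le (by omega) (by rw [add_mul, one_mul]; omega)
        have hdiv0 : (i - s * k - r) / k = 0 := Nat.div_eq_of_lt (by omega)
        rw [if_pos hC, hdiv, if_neg hA, if_neg hB, hdiv0, if_neg hB, if_pos hC]
        simp only [add_zero]
        omega
      · by_cases hD : i < s * k + k + r
        · have hdiv0 : (i - s * k - r) / k = 0 := Nat.div_eq_of_lt (by omega)
          rw [if_neg hC, if_pos (show i < s*k + k + r by omega), if_neg hA, if_neg hB, hdiv0,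
            if_neg hB, if_neg hC, if_pos hD]
          simp only [add_zero]
          omega
        · have hj : i - s * k - r = (i - (s*k + k) - r) + k := by omega
          have hdiv : (i - s*k - r) / k = (i - (s*k+k) - r) / k + 1 := by
            rw [hj, Nat.add_div_right _ hk]
          rw [if_neg hC, if_neg hD, if_neg hA, if_neg hB, hdiv,
            if_neg hB, if_neg hC, if_neg hD]
          have : s + ((i - (s*k+k) - r) / k + 1) = s + 1 + (i - (s*k+k) - r) / k := by omega
          rw [this]
          simp

lemma gsum (n k q r s : ℕ) (hqr : n = q * k + r) (hrk : r < k) (hs : s + 1 ≤ q) :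
    ∑ i ∈ range n, gfun k r s i = 0 := by
  have hqk : s * k + k + r ≤ n := by
    have h1 : (s+1) * k ≤ q * k := Nat.mul_le_mul_right k hs
    rw [add_mul, one_mul] at h1; omega
  rw [range_eq_Ico,
    ← Finset.sum_Ico_consecutive (gfun k r s) (show (0:ℕ) ≤ s*k+k+r by omega) hqk,
    ← Finset.sum_Ico_consecutive (gfun k r s) (show (0:ℕ) ≤ s*k+k by omega) (show s*k+k ≤ s*k+k+r by omega),
    ← Finset.sum_Ico_consecutive (gfun k r s) (show (0:ℕ) ≤ s*k+r by omega) (show s*k+r ≤ s*k+k by omega)]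
  have e1 : ∑ i ∈ Ico 0 (s*k+r), gfun k r s i = 0 := by
    apply Finset.sum_eq_zero
    intro i hi
    simp only [mem_Ico] at hi
    exact if_pos (by omega)
  have e2 : ∑ i ∈ Ico (s*k+r) (s*k+k), gfun k r s i = (k - r : ℕ) * (r : ℤ) := by
    rw [Finset.sum_congr rfl (fun i hi => ?_), Finset.sum_const, Nat.card_Ico,
      nsmul_eq_mul]
    · congr 1; omega
    · simp only [mem_Ico] at hi
      unfold gfun
      rw [if_neg (by omega), if_pos (by omega)]
  have e3 : ∑ i ∈ Ico (s*k+k) (s*k+k+r), gfun k r s i = (r : ℤ) * ((r : ℤ) - k) := by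
    rw [Finset.sum_congr rfl (fun i hi => ?_), Finset.sum_const, Nat.card_Ico,
      nsmul_eq_mul]
    · congr 1; omega
    · simp only [mem_Ico] at hi
      unfold gfun
      rw [if_neg (by omega), if_neg (by omega), if_pos (by omega)]
  have e4 : ∑ i ∈ Ico (s*k+k+r) n, gfun k r s i = 0 := by
    apply Finset.sum_eq_zero
    intro i hi
    simp only [mem_Ico] at hi
    unfold gfun
    rw [if_neg (by omega), if_neg (by omega), if_neg (by omega)]
  rw [e1, e2, e3, e4]
  have : ((k - r : ℕ) : ℤ) = (k : ℤ) - r := by omega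
  rw [this]; ring

lemma prefix_nonneg (f : ℕ → ℤ) (T n : ℕ) (h1 : ∀ i, i < T → 0 ≤ f i)
    (h2 : ∀ i, T ≤ i → f i ≤ 0) (htot : ∑ i ∈ range n, f i = 0)
    (t : ℕ) (ht : t ≤ n) : 0 ≤ ∑ i ∈ range t, f i := by
  rcases le_or_gt t T with h | h
  · exact Finset.sum_nonneg fun i hi => h1 i (lt_of_lt_of_le (mem_range.mp hi) h)
  · have hsplit := Finset.sum_range_add_sum_Ico f ht
    have hneg : ∑ i ∈ Ico t n, f i ≤ 0 := by
      apply Finset.sum_nonpos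
      intro i hi
      simp only [mem_Ico] at hi
      exact h2 i (by omega)
    omega

lemma step (n k q r s : ℕ) (hk : 1 ≤ k)
    (hqr : n = q * k + r) (hr0 : 0 < r) (hrk : r < k) (hs : s + 1 ≤ q) :
    (∀ t, t ≤ n →
      ∑ i ∈ range t, dseq n k r s i ≤ ∑ i ∈ range t, dseq n k r (s+1) i) ∧
    ∑ i ∈ range n, dseq n k r s i = ∑ i ∈ range n, dseq n k r (s+1) i := by
  have key : ∀ t, ∑ i ∈ range t, (dseq n k r (s+1) i : ℤ)
      = ∑ i ∈ range t, (dseq n k r s i : ℤ) + ∑ i ∈ range t, gfun k r s i := by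
    intro t
    rw [← Finset.sum_add_distrib]
    exact Finset.sum_congr rfl fun i _ => dseq_succ n k q r s hk hqr hr0 hrk hs i
  constructor
  · intro t ht
    have h0 : 0 ≤ ∑ i ∈ range t, gfun k r s i := by
      apply prefix_nonneg (gfun k r s) (s*k+k) n _ _ (gsum n k q r s hqr hrk hs) t ht
      · intro i hi
        unfold gfun
        split_ifs <;> omega
      · intro i hi
        unfold gfun
        split_ifs <;> omega
    have := key t
    have hcast : (↑(∑ i ∈ range t, dseq n k r s i) : ℤ) ≤ ↑(∑ i ∈ range t, dseq n k r (s+1) i) := by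
      push_cast
      omega
    exact_mod_cast hcast
  · have := key n
    rw [gsum n k q r s hqr hrk hs, add_zero] at this
    have hcast : (↑(∑ i ∈ range n, dseq n k r s i) : ℤ) = ↑(∑ i ∈ range n, dseq n k r (s+1) i) := by
      push_cast
      omega
    exact_mod_cast hcast

theorem F_majorization (n k q r : ℕ) (hn : 1 ≤ n) (hk : 1 ≤ k)
    (hqr : n = q * k + r) (hr0 : 0 < r) (hrk : r < k)
    (s₁ s₂ : ℕ) (h21 : s₂ < s₁) (h1q : s₁ ≤ q) :
    (∀ t, 1 ≤ t → t ≤ n →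
      ∑ i ∈ range t, dseq n k r s₂ i ≤ ∑ i ∈ range t, dseq n k r s₁ i) ∧
    ∑ i ∈ range n, dseq n k r s₂ i = ∑ i ∈ range n, dseq n k r s₁ i := by
  induction s₁, h21 using Nat.le_induction with
  | base =>
    obtain ⟨h1, h2⟩ := step n k q r s₂ hk hqr hr0 hrk h1q
    exact ⟨fun t _ ht => h1 t ht, h2⟩
  | succ m hm ih =>
    obtain ⟨ih1, ih2⟩ := ih (by omega)
    obtain ⟨h1, h2⟩ := step n k q r m hk hqr hr0 hrk h1q
    exact ⟨fun t h1t ht => le_trans (ih1 t h1t ht) (h1 t ht), ih2.trans h2⟩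
end

section
/- Let k,n ∈ ℕ⁺ with n = qk + r, 0 < r < k. Then LE(F^1_{n,k}) < LE(F^2_{n,k}) < ⋯ < LE(F^{q+1}_{n,k}), where LE(F^{s+1}_{n,k}) = ∑_{i=1}^{s} k(n−1−(i−1)k)² + r(n−1−sk)² + ∑_{i=s+2}^{q+1} k(n−1−(i−2)k−r)² + (q k(k−1) + r(r−1)). -/
open Finset

/-- Laplacian energy of `F^{s+1}_{n,k}`:
`∑_{i=1}^{s} k(n−1−(i−1)k)² + r(n−1−sk)² + ∑_{i=s+2}^{q+1} k(n−1−(i−2)k−r)²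
  + (qk(k−1) + r(r−1))`. -/
def LEF (n k q r s : ℕ) : ℕ :=
  (∑ i ∈ range s, k * (n - 1 - i * k) ^ 2) + r * (n - 1 - s * k) ^ 2
    + (∑ i ∈ range (q - s), k * (n - 1 - (s + i) * k - r) ^ 2)
    + (q * k * (k - 1) + r * (r - 1))

lemma LEF_core (a k r : ℕ) (hr0 : 0 < r) (hrk : r < k) (hka : k ≤ a) :
    r * a ^ 2 + k * (a - r) ^ 2 < k * a ^ 2 + r * (a - k) ^ 2 := by
  have hra : r ≤ a := le_trans hrk.le hka
  zify [hra, hka]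
  have h1 : 0 < (k : ℤ) - r := by omega
  have h2 : 0 < (r : ℤ) := by omega
  have h3 : (k : ℤ) ≤ a := by omega
  nlinarith [mul_pos (mul_pos h2 (h2.trans_le (by omega : (r:ℤ) ≤ k))) h1]

theorem LEF_strict_mono (n k q r : ℕ) (hn : 1 ≤ n) (hk : 1 ≤ k)
    (hqr : n = q * k + r) (hr0 : 0 < r) (hrk : r < k) :
    ∀ s, s < q → LEF n k q r s < LEF n k q r (s + 1) := by
  intro s hs
  have hsk : s * k + k + r ≤ n := by
    rw [hqr]
    have : s + 1 ≤ q := hs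
    nlinarith [Nat.mul_le_mul_right k this]
  have hka : k ≤ n - 1 - s * k := by omega
  have hsplit1 : (q - s) = (q - (s + 1)) + 1 := by omega
  have e1 : (∑ i ∈ range (q - s), k * (n - 1 - (s + i) * k - r) ^ 2)
      = k * (n - 1 - s * k - r) ^ 2
        + ∑ i ∈ range (q - (s + 1)), k * (n - 1 - (s + 1 + i) * k - r) ^ 2 := by
    rw [hsplit1, Finset.sum_range_succ', add_comm]
    congr 1
    exact Finset.sum_congr rfl fun i _ => by rw [show s + (i + 1) = s + 1 + i from by omega]
  have e2 : (∑ i ∈ range (s + 1), k * (n - 1 - i * k) ^ 2)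
      = (∑ i ∈ range s, k * (n - 1 - i * k) ^ 2) + k * (n - 1 - s * k) ^ 2 :=
    Finset.sum_range_succ _ _
  have e3 : n - 1 - (s + 1) * k = n - 1 - s * k - k := by rw [add_mul, one_mul]; omega
  have key := LEF_core (n - 1 - s * k) k r hr0 hrk hka
  unfold LEF
  rw [e1, e2, e3]
  linarith
end
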